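/- With the notation D = UΛVᵀ (compact SVD), B = Λ² + ν Vᵀ X*(I − U₁U₁ᵀ)XV, and D A⁺ Dᵀ = U Λ B^{-1} Λ Uᵀ: suppose λ_D² I ⪯ Λ² and ‖X*X‖₂ ≤ Λ_X². Then Λ² ⪯ B ⪯ (1 + νΛ_X²/λ_D²)Λ², every eigenvalue of D A⁺ Dᵀ lies in [0,1], and every nonzero eigenvalue of D A⁺ Dᵀ is at least 1/(1 + νΛ_X²/λ_D²). -/

import Mathlib

open Matrix

/-- Euclidean operator norm of a real matrix. -/
noncomputable def matOpNorm {a b : Type*} [Fintype a] [Fintype b] [DecidableEq b]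
    (M : Matrix a b ℝ) : ℝ :=
  ‖LinearMap.toContinuousLinearMap (Matrix.toEuclideanLin M)‖

section Helpers

variable {k l : Type*} [Fintype k] [Fintype l] [DecidableEq k] [DecidableEq l]

lemma psd_tmul (A : Matrix k l ℝ) : (Aᵀ * A).PosSemidef := by
  have := Matrix.posSemidef_conjTranspose_mul_self A
  rwa [Matrix.conjTranspose_eq_transpose_of_trivial] at this

lemma psd_smul {A : Matrix k k ℝ} (hA : A.PosSemidef) {c : ℝ} (hc : 0 ≤ c) :
    (c • A).PosSemidef := by
  refine Matrix.PosSemidef.of_dotProduct_mulVec_nonneg ?_ fun x => ?_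
  · show (c • A)ᴴ = c • A
    rw [Matrix.conjTranspose_smul, hA.1.eq, star_trivial]
  · rw [Matrix.smul_mulVec, dotProduct_smul]
    exact mul_nonneg hc (hA.dotProduct_mulVec_nonneg x)

lemma psd_conj {A : Matrix k k ℝ} (hA : A.PosSemidef) (W : Matrix k l ℝ) :
    (Wᵀ * A * W).PosSemidef := by
  have := hA.conjTranspose_mul_mul_same W
  rwa [Matrix.conjTranspose_eq_transpose_of_trivial] at this

lemma psd_conj' {A : Matrix k k ℝ} (hA : A.PosSemidef) (W : Matrix l k ℝ) :
    (W * A * Wᵀ).PosSemidef := by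
  have := hA.mul_mul_conjTranspose_same W
  rwa [Matrix.conjTranspose_eq_transpose_of_trivial] at this

lemma proj_psd (W : Matrix k l ℝ) : (W * Wᵀ).PosSemidef := by
  have := psd_tmul Wᵀ
  rwa [Matrix.transpose_transpose] at this

lemma proj_compl_psd (W : Matrix k l ℝ) (hW : Wᵀ * W = 1) :
    ((1 : Matrix k k ℝ) - W * Wᵀ).PosSemidef := by
  set Q : Matrix k k ℝ := W * Wᵀ with hQdef
  have hQQ : Q * Q = Q := by
    rw [hQdef, Matrix.mul_assoc W Wᵀ (W * Wᵀ), ← Matrix.mul_assoc Wᵀ W Wᵀ, hW, Matrix.one_mul]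
  have hQsym : Qᵀ = Q := by rw [hQdef, Matrix.transpose_mul, Matrix.transpose_transpose]
  have key : (1 : Matrix k k ℝ) - Q = ((1 : Matrix k k ℝ) - Q)ᵀ * ((1 : Matrix k k ℝ) - Q) := by
    rw [Matrix.transpose_sub, Matrix.transpose_one, hQsym]
    simp only [Matrix.sub_mul, Matrix.mul_sub, hQQ, Matrix.mul_one, Matrix.one_mul]
    abel
  rw [key]
  exact psd_tmul _

lemma posDef_smul_one {c : ℝ} (hc : 0 < c) : (c • (1 : Matrix k k ℝ)).PosDef := by
  rw [Matrix.smul_one_eq_diagonal]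
  exact Matrix.posDef_diagonal_iff.mpr fun _ => hc

lemma psd_of_opNorm_le {A : Matrix k k ℝ} (hA : Aᵀ = A) {c : ℝ} (h : matOpNorm A ≤ c) :
    (c • (1 : Matrix k k ℝ) - A).PosSemidef := by
  refine Matrix.PosSemidef.of_dotProduct_mulVec_nonneg ?_ fun x => ?_
  · show (c • (1 : Matrix k k ℝ) - A)ᴴ = _
    simp only [Matrix.conjTranspose_sub, Matrix.conjTranspose_smul, Matrix.conjTranspose_one,
      Matrix.conjTranspose_eq_transpose_of_trivial, hA, star_trivial]
    rw [Matrix.transpose_sub, Matrix.transpose_smul, Matrix.transpose_one, hA]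
  · have hx : star x = x := by
      funext i; simp
    rw [hx, Matrix.sub_mulVec, dotProduct_sub, Matrix.smul_mulVec,
      Matrix.one_mulVec, dotProduct_smul, smul_eq_mul]
    have key : dotProduct x (A *ᵥ x) ≤ matOpNorm A * dotProduct x x := by
      set L := LinearMap.toContinuousLinearMap (Matrix.toEuclideanLin A) with hL
      set v : EuclideanSpace ℝ k := (WithLp.equiv 2 (k → ℝ)).symm x with hv
      have h1 : dotProduct x (A *ᵥ x) = inner ℝ v (L v) := by
        simp only [hL, hv, LinearMap.coe_toContinuousLinearMap', Matrix.toEuclideanLin_apply,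
          PiLp.inner_apply, RCLike.inner_apply, conj_trivial]
        exact Finset.sum_congr rfl fun i _ => mul_comm _ _
      have h2 : dotProduct x x = inner ℝ v v := by
        simp only [hv, PiLp.inner_apply, RCLike.inner_apply, conj_trivial]
        rfl
      have h3 : inner ℝ v (L v) ≤ ‖v‖ * ‖L v‖ := real_inner_le_norm v (L v)
      have h4 : ‖L v‖ ≤ ‖L‖ * ‖v‖ := L.le_opNorm v
      have h5 : (inner ℝ v v : ℝ) = ‖v‖ * ‖v‖ := real_inner_self_eq_norm_mul_norm v
      rw [h1, h2, h5]
      calc inner ℝ v (L v) ≤ ‖v‖ * ‖L v‖ := h3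
        _ ≤ ‖v‖ * (‖L‖ * ‖v‖) := by
            exact mul_le_mul_of_nonneg_left h4 (norm_nonneg v)
        _ = ‖L‖ * (‖v‖ * ‖v‖) := by ring
        _ = matOpNorm A * (‖v‖ * ‖v‖) := rfl
    have hxx : 0 ≤ dotProduct x x := by
      have := dotProduct_star_self_nonneg x
      rwa [hx] at this
    have : matOpNorm A * dotProduct x x ≤ c * dotProduct x x :=
      mul_le_mul_of_nonneg_right h hxx
    linarith

end Helpers

set_option maxHeartbeats 1600000 in
/-- If `λ_D² I ⪯ Λ²` and `‖X*X‖₂ ≤ Λ_X²`, then `Λ² ⪯ B ⪯ (1 + νΛ_X²/λ_D²)Λ²`,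
every eigenvalue of `D A⁺ Dᵀ = U Λ B⁻¹ Λ Uᵀ` lies in `[0,1]`, and every nonzero
eigenvalue is at least `1/(1 + νΛ_X²/λ_D²)`. -/
theorem B_bounds_and_eigenvalues {n m p r r' : ℕ}
    (X : Matrix (Fin n) (Fin p) ℝ) (D : Matrix (Fin m) (Fin p) ℝ) (ν : ℝ) (hν : 0 < ν)
    (U : Matrix (Fin m) (Fin r) ℝ) (Λ : Matrix (Fin r) (Fin r) ℝ)
    (V : Matrix (Fin p) (Fin r) ℝ) (U₁ : Matrix (Fin n) (Fin r') ℝ)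
    (hU : Uᵀ * U = 1) (hΛsym : Λᵀ = Λ) (hV : Vᵀ * V = 1) (hU₁ : U₁ᵀ * U₁ = 1)
    (Xstar : Matrix (Fin p) (Fin n) ℝ) (hXstar : Xstar = ((n : ℝ))⁻¹ • Xᵀ)
    (lamD LamX : ℝ) (hlamD : 0 < lamD)
    (hΛlow : (Λ * Λ - (lamD ^ 2) • (1 : Matrix (Fin r) (Fin r) ℝ)).PosSemidef)
    (hXX : matOpNorm (Xstar * X) ≤ LamX ^ 2)
    (B : Matrix (Fin r) (Fin r) ℝ)
    (hB : B = Λ * Λ + ν • (Vᵀ * Xstar * ((1 : Matrix (Fin n) (Fin n) ℝ) - U₁ * U₁ᵀ) * X * V))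
    (Aplus : Matrix (Fin p) (Fin p) ℝ)
    (hDAD : D * Aplus * Dᵀ = U * Λ * B⁻¹ * Λ * Uᵀ) :
    (B - Λ * Λ).PosSemidef ∧
    ((1 + ν * LamX ^ 2 / lamD ^ 2) • (Λ * Λ) - B).PosSemidef ∧
    (∀ μ : ℝ, Module.End.HasEigenvalue (D * Aplus * Dᵀ).mulVecLin μ →
      (0 ≤ μ ∧ μ ≤ 1) ∧ (μ ≠ 0 → 1 / (1 + ν * LamX ^ 2 / lamD ^ 2) ≤ μ)) := by
  have hninv : (0 : ℝ) ≤ ((n : ℝ))⁻¹ := by positivity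
  have hLamX2 : (0 : ℝ) ≤ LamX ^ 2 := sq_nonneg LamX
  have hlamD2 : (0 : ℝ) < lamD ^ 2 := by positivity
  set Q : Matrix (Fin n) (Fin n) ℝ := U₁ * U₁ᵀ with hQdef
  set S : Matrix (Fin r) (Fin r) ℝ :=
    Vᵀ * Xstar * ((1 : Matrix (Fin n) (Fin n) ℝ) - Q) * X * V with hSdef
  -- inner matrix is psd
  have hinner : (Xstar * ((1 : Matrix (Fin n) (Fin n) ℝ) - Q) * X).PosSemidef := by
    have h1 : (Xᵀ * ((1 : Matrix (Fin n) (Fin n) ℝ) - Q) * X).PosSemidef :=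
      psd_conj (proj_compl_psd U₁ hU₁) X
    have heq : Xstar * ((1 : Matrix (Fin n) (Fin n) ℝ) - Q) * X =
        ((n : ℝ))⁻¹ • (Xᵀ * ((1 : Matrix (Fin n) (Fin n) ℝ) - Q) * X) := by
      rw [hXstar, Matrix.smul_mul, Matrix.smul_mul]
    rw [heq]
    exact psd_smul h1 hninv
  have hSpsd : S.PosSemidef := by
    have heq : S = Vᵀ * (Xstar * ((1 : Matrix (Fin n) (Fin n) ℝ) - Q) * X) * V := by
      rw [hSdef]; simp only [Matrix.mul_assoc]
    rw [heq]
    exact psd_conj hinner V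
  -- Part 1
  have part1 : (B - Λ * Λ).PosSemidef := by
    rw [hB, add_sub_cancel_left]
    exact psd_smul hSpsd hν.le
  -- Part 2
  have hXsym : (Xstar * X)ᵀ = Xstar * X := by
    rw [hXstar, Matrix.transpose_mul, Matrix.transpose_smul, Matrix.transpose_transpose,
      Matrix.smul_mul, Matrix.mul_smul]
  have hXXpsd : (LamX ^ 2 • (1 : Matrix (Fin p) (Fin p) ℝ) - Xstar * X).PosSemidef :=
    psd_of_opNorm_le hXsym hXX
  have hXQXpsd : (Xstar * Q * X).PosSemidef := by
    have heq : Xstar * Q * X = ((n : ℝ))⁻¹ • (Xᵀ * Q * X) := by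
      rw [hXstar, Matrix.smul_mul, Matrix.smul_mul]
    rw [heq]
    exact psd_smul (psd_conj (proj_psd U₁) X) hninv
  have hTpsd : (LamX ^ 2 • (1 : Matrix (Fin p) (Fin p) ℝ)
      - Xstar * ((1 : Matrix (Fin n) (Fin n) ℝ) - Q) * X).PosSemidef := by
    have heq : LamX ^ 2 • (1 : Matrix (Fin p) (Fin p) ℝ)
        - Xstar * ((1 : Matrix (Fin n) (Fin n) ℝ) - Q) * X =
        (LamX ^ 2 • (1 : Matrix (Fin p) (Fin p) ℝ) - Xstar * X) + Xstar * Q * X := by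
      rw [Matrix.mul_sub, Matrix.mul_one, Matrix.sub_mul]
      abel
    rw [heq]
    exact hXXpsd.add hXQXpsd
  have hSle : (LamX ^ 2 • (1 : Matrix (Fin r) (Fin r) ℝ) - S).PosSemidef := by
    have heq : LamX ^ 2 • (1 : Matrix (Fin r) (Fin r) ℝ) - S =
        Vᵀ * (LamX ^ 2 • (1 : Matrix (Fin p) (Fin p) ℝ)
          - Xstar * ((1 : Matrix (Fin n) (Fin n) ℝ) - Q) * X) * V := by
      rw [Matrix.mul_sub, Matrix.sub_mul]
      congr 1
      · rw [Matrix.mul_smul, Matrix.mul_one, Matrix.smul_mul, hV]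
      · rw [hSdef]; simp only [Matrix.mul_assoc]
    rw [heq]
    exact psd_conj hTpsd V
  have part2 : ((1 + ν * LamX ^ 2 / lamD ^ 2) • (Λ * Λ) - B).PosSemidef := by
    have heq : (1 + ν * LamX ^ 2 / lamD ^ 2) • (Λ * Λ) - B =
        (ν * (lamD ^ 2)⁻¹) •
          (LamX ^ 2 • (Λ * Λ - lamD ^ 2 • (1 : Matrix (Fin r) (Fin r) ℝ))) +
        ν • (LamX ^ 2 • (1 : Matrix (Fin r) (Fin r) ℝ) - S) := by
      rw [hB]
      match_scalars <;> field_simp <;> ring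
    rw [heq]
    exact (psd_smul (psd_smul hΛlow hLamX2)
      (mul_nonneg hν.le (inv_nonneg.mpr hlamD2.le))).add (psd_smul hSle hν.le)
  refine ⟨part1, part2, ?_⟩
  -- Part 3
  set c : ℝ := 1 + ν * LamX ^ 2 / lamD ^ 2 with hcdef
  have hc : 0 < c := by positivity
  have hΛ2pd : (Λ * Λ).PosDef := by
    have : Λ * Λ = (Λ * Λ - lamD ^ 2 • (1 : Matrix (Fin r) (Fin r) ℝ))
        + lamD ^ 2 • (1 : Matrix (Fin r) (Fin r) ℝ) := by abel
    rw [this]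
    exact Matrix.PosDef.posSemidef_add hΛlow (posDef_smul_one hlamD2)
  have hΛdet : IsUnit Λ.det := by
    have hpos := hΛ2pd.det_pos
    rw [Matrix.det_mul] at hpos
    exact isUnit_iff_ne_zero.mpr fun h => by rw [h, mul_zero] at hpos; exact lt_irrefl 0 hpos
  have hΛiΛ : Λ⁻¹ * Λ = 1 := Matrix.nonsing_inv_mul Λ hΛdet
  have hΛΛi : Λ * Λ⁻¹ = 1 := Matrix.mul_nonsing_inv Λ hΛdet
  set P : Matrix (Fin r) (Fin r) ℝ := Λ⁻¹ * B * Λ⁻¹ with hPdef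
  have hconj1 : Λ⁻¹ * (Λ * Λ) * Λ⁻¹ = 1 := by
    rw [← Matrix.mul_assoc, hΛiΛ, Matrix.one_mul, hΛΛi]
  have hP1 : (P - 1).PosSemidef := by
    have h := psd_conj part1 Λ⁻¹
    have hΛit : (Λ⁻¹)ᵀ = Λ⁻¹ := by rw [Matrix.transpose_nonsing_inv, hΛsym]
    rw [hΛit, Matrix.mul_sub, Matrix.sub_mul, hconj1] at h
    exact h
  have hP2 : (c • (1 : Matrix (Fin r) (Fin r) ℝ) - P).PosSemidef := by
    have h := psd_conj part2 Λ⁻¹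
    have hΛit : (Λ⁻¹)ᵀ = Λ⁻¹ := by rw [Matrix.transpose_nonsing_inv, hΛsym]
    rw [hΛit, Matrix.mul_sub, Matrix.sub_mul, Matrix.mul_smul, Matrix.smul_mul, hconj1] at h
    exact h
  have hPpd : P.PosDef := by
    have : P = (P - 1) + 1 := by abel
    rw [this]
    exact Matrix.PosDef.posSemidef_add hP1 Matrix.PosDef.one
  have hPdet : IsUnit P.det := Matrix.isUnit_iff_isUnit_det P |>.mp hPpd.isUnit
  have hPinv : P⁻¹ = Λ * B⁻¹ * Λ := by
    rw [hPdef, Matrix.mul_inv_rev, Matrix.mul_inv_rev,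
      Matrix.nonsing_inv_nonsing_inv Λ hΛdet, ← Matrix.mul_assoc]
  letI : Invertible P := hPpd.isUnit.invertible
  letI : Invertible (P⁻¹) := hPpd.inv.isUnit.invertible
  letI : Invertible (c • (1 : Matrix (Fin r) (Fin r) ℝ)) :=
    (posDef_smul_one (k := Fin r) hc).isUnit.invertible
  letI : Invertible (1 : Matrix (Fin r) (Fin r) ℝ) := invertibleOne
  -- Schur: 1 - P⁻¹ psd
  have hiff1 := Matrix.PosDef.fromBlocks₁₁ (A := (1 : Matrix (Fin r) (Fin r) ℝ))
    (1 : Matrix (Fin r) (Fin r) ℝ) P Matrix.PosDef.one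
  have hiff2 := Matrix.PosDef.fromBlocks₂₂ (1 : Matrix (Fin r) (Fin r) ℝ)
    (1 : Matrix (Fin r) (Fin r) ℝ) hPpd
  simp only [Matrix.conjTranspose_one, inv_one, Matrix.one_mul, Matrix.mul_one] at hiff1 hiff2
  have h1mPinv : ((1 : Matrix (Fin r) (Fin r) ℝ) - P⁻¹).PosSemidef :=
    hiff2.mp (hiff1.mpr hP1)
  -- Schur: P⁻¹ - c⁻¹ • 1 psd
  have hcinv : (c • (1 : Matrix (Fin r) (Fin r) ℝ))⁻¹ = c⁻¹ • (1 : Matrix (Fin r) (Fin r) ℝ) := by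
    apply Matrix.inv_eq_right_inv
    rw [Matrix.smul_mul, Matrix.mul_smul, Matrix.mul_one, smul_smul,
      mul_inv_cancel₀ hc.ne', one_smul]
  have hiff3 := Matrix.PosDef.fromBlocks₂₂ (c • (1 : Matrix (Fin r) (Fin r) ℝ))
    (1 : Matrix (Fin r) (Fin r) ℝ) hPpd.inv
  have hiff4 := Matrix.PosDef.fromBlocks₁₁ (A := c • (1 : Matrix (Fin r) (Fin r) ℝ))
    (1 : Matrix (Fin r) (Fin r) ℝ) (P⁻¹) (posDef_smul_one hc)
  simp only [Matrix.conjTranspose_one, Matrix.one_mul, Matrix.mul_one,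
    Matrix.nonsing_inv_nonsing_inv P hPdet, hcinv] at hiff3 hiff4
  have hPinvLB : (P⁻¹ - c⁻¹ • (1 : Matrix (Fin r) (Fin r) ℝ)).PosSemidef :=
    hiff4.mp (hiff3.mpr hP2)
  -- The matrix M
  have hMrw : U * Λ * B⁻¹ * Λ * Uᵀ = U * P⁻¹ * Uᵀ := by
    rw [hPinv]; simp only [Matrix.mul_assoc]
  have hMpsd : (U * P⁻¹ * Uᵀ).PosSemidef := psd_conj' hPpd.inv.posSemidef U
  have h1M : ((1 : Matrix (Fin m) (Fin m) ℝ) - U * P⁻¹ * Uᵀ).PosSemidef := by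
    have heq : (1 : Matrix (Fin m) (Fin m) ℝ) - U * P⁻¹ * Uᵀ =
        ((1 : Matrix (Fin m) (Fin m) ℝ) - U * Uᵀ)
          + U * ((1 : Matrix (Fin r) (Fin r) ℝ) - P⁻¹) * Uᵀ := by
      rw [Matrix.mul_sub, Matrix.sub_mul, Matrix.mul_one]
      abel
    rw [heq]
    exact (proj_compl_psd U hU).add (psd_conj' h1mPinv U)
  have hMlow : (U * P⁻¹ * Uᵀ - c⁻¹ • (U * Uᵀ)).PosSemidef := by
    have heq : U * P⁻¹ * Uᵀ - c⁻¹ • (U * Uᵀ) =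
        U * (P⁻¹ - c⁻¹ • (1 : Matrix (Fin r) (Fin r) ℝ)) * Uᵀ := by
      rw [Matrix.mul_sub, Matrix.sub_mul, Matrix.mul_smul, Matrix.mul_one, Matrix.smul_mul]
    rw [heq]
    exact psd_conj' hPinvLB U
  have hUUM : (U * Uᵀ) * (U * P⁻¹ * Uᵀ) = U * P⁻¹ * Uᵀ := by
    simp only [Matrix.mul_assoc]
    rw [← Matrix.mul_assoc Uᵀ U, hU, Matrix.one_mul]
  -- eigenvalue bounds
  intro μ hμ
  rw [hDAD, hMrw] at hμ
  obtain ⟨v, hv⟩ := hμ.exists_hasEigenvector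
  have hvne : v ≠ 0 := hv.2
  have hveq : (U * P⁻¹ * Uᵀ) *ᵥ v = μ • v := hv.apply_eq_smul
  have hstar : star v = v := by funext i; simp
  have hd : 0 < dotProduct v v := by
    have := Matrix.dotProduct_star_self_pos_iff (v := v).mpr hvne
    rwa [hstar] at this
  have hq : dotProduct v ((U * P⁻¹ * Uᵀ) *ᵥ v) = μ * dotProduct v v := by
    rw [hveq, dotProduct_smul, smul_eq_mul]
  have h0 : 0 ≤ μ * dotProduct v v := by
    have := hMpsd.dotProduct_mulVec_nonneg v
    rwa [hstar, hq] at this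
  have hμ0 : 0 ≤ μ := by
    by_contra h
    push_neg at h
    nlinarith
  have hμ1 : μ ≤ 1 := by
    have := h1M.dotProduct_mulVec_nonneg v
    rw [hstar, Matrix.sub_mulVec, Matrix.one_mulVec, dotProduct_sub, hq] at this
    nlinarith
  refine ⟨⟨hμ0, hμ1⟩, fun hμne => ?_⟩
  -- v is in the range of U
  have hproj : (U * Uᵀ) *ᵥ v = v := by
    have h1 : (U * Uᵀ) *ᵥ ((U * P⁻¹ * Uᵀ) *ᵥ v) = (U * P⁻¹ * Uᵀ) *ᵥ v := by
      rw [Matrix.mulVec_mulVec, hUUM]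
    rw [hveq, Matrix.mulVec_smul] at h1
    exact smul_right_injective _ hμne h1
  have hlow := hMlow.dotProduct_mulVec_nonneg v
  rw [hstar, Matrix.sub_mulVec, dotProduct_sub, hq, Matrix.smul_mulVec,
    dotProduct_smul, hproj, smul_eq_mul] at hlow
  rw [one_div]
  by_contra h
  push_neg at h
  nlinarith
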